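/- arXiv:2409.19981 — 2 statements merged into one kernel-verified Lean document; each statement's English description precedes it below -/
import Mathlib

section
/- Let Ω ⊆ ℂⁿ be open and let φ : Ω → ℝ be continuous. The following are equivalent: (i) −φ is plurisubharmonic on Ω; (ii) for every open U ⊆ Ω and every holomorphic s : U → ℂ, the function z ↦ ‖s(z)‖² · exp(−φ(z)) is plurisubharmonic on U; (iii) for every open U ⊆ Ω and every nowhere-vanishing holomorphic s : U → ℂ, the function z ↦ 2·log ‖s(z)‖ − φ(z) is plurisubharmonic on U. -/
open MeasureTheory

noncomputable section

section PshHelpers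

open Complex Metric Set Submodule

def cpt (r θ : ℝ) : ℂ := (r:ℂ) * Complex.exp ((θ:ℂ) * Complex.I)

lemma cpt_cont (r : ℝ) : Continuous (cpt r) := by
  exact continuous_const.mul (Complex.continuous_exp.comp
    (Complex.continuous_ofReal.mul continuous_const))

lemma cpt_mem_sphere {r : ℝ} (hr : 0 < r) (θ : ℝ) : cpt r θ ∈ Metric.sphere (0:ℂ) r := by
  simp [cpt, mem_sphere_iff_norm, norm_mul, Complex.norm_exp_ofReal_mul_I, Complex.norm_real,
    abs_of_pos hr]

lemma cpt_mem_closedBall {r : ℝ} (hr : 0 < r) (θ : ℝ) : cpt r θ ∈ Metric.closedBall (0:ℂ) r :=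
  sphere_subset_closedBall (cpt_mem_sphere hr θ)

lemma cpt_abs_le {r : ℝ} (hr : 0 < r) (θ : ℝ) : ‖cpt r θ‖ ≤ r := by
  have := cpt_mem_sphere hr θ
  simp only [mem_sphere_iff_norm, sub_zero] at this
  exact this.le

lemma avg_sq_le {f : ℝ → ℝ} (hf : Continuous f) :
    ((1/(2*Real.pi)) * ∫ θ in (0:ℝ)..(2*Real.pi), f θ)^2
      ≤ (1/(2*Real.pi)) * ∫ θ in (0:ℝ)..(2*Real.pi), (f θ)^2 := by
  have h2π : (0:ℝ) < 2*Real.pi := Real.two_pi_pos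
  have hfi : IntervalIntegrable f volume 0 (2*Real.pi) := hf.intervalIntegrable _ _
  have hf2i : IntervalIntegrable (fun θ => (f θ)^2) volume 0 (2*Real.pi) :=
    (hf.pow 2).intervalIntegrable _ _
  set m : ℝ := (1/(2*Real.pi)) * ∫ θ in (0:ℝ)..(2*Real.pi), f θ with hm
  have hIf : (∫ θ in (0:ℝ)..(2*Real.pi), f θ) = (2*Real.pi) * m := by
    rw [hm]; field_simp
  have h0 : (0:ℝ) ≤ ∫ θ in (0:ℝ)..(2*Real.pi), (f θ - m)^2 :=
    intervalIntegral.integral_nonneg h2π.le (fun u _ => sq_nonneg _)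
  have hexp : (∫ θ in (0:ℝ)..(2*Real.pi), (f θ - m)^2)
      = (∫ θ in (0:ℝ)..(2*Real.pi), (f θ)^2) - (2*m) * ((2*Real.pi) * m)
        + (2*Real.pi) * m^2 := by
    have e1 : ∀ θ : ℝ, (f θ - m)^2 = (f θ)^2 - (2*m) * f θ + m^2 := fun θ => by ring
    rw [intervalIntegral.integral_congr (fun θ _ => e1 θ)]
    rw [intervalIntegral.integral_add ((hf2i.sub (hfi.const_mul (2*m)))) intervalIntegrable_const,
      intervalIntegral.integral_sub hf2i (hfi.const_mul (2*m)),
      intervalIntegral.integral_const_mul, hIf, intervalIntegral.integral_const]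
    simp [smul_eq_mul]
  have key : (2*Real.pi) * m^2 ≤ ∫ θ in (0:ℝ)..(2*Real.pi), (f θ)^2 := by
    nlinarith [h0, hexp]
  calc m^2 = (1/(2*Real.pi)) * ((2*Real.pi) * m^2) := by field_simp
    _ ≤ (1/(2*Real.pi)) * ∫ θ in (0:ℝ)..(2*Real.pi), (f θ)^2 :=
      mul_le_mul_of_nonneg_left key (by positivity)

lemma mvp_analytic {r : ℝ} (hr : 0 < r) {F : ℂ → ℂ}
    (hF : ∀ w ∈ Metric.closedBall (0:ℂ) r, AnalyticAt ℂ F w) :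
    (∫ θ in (0:ℝ)..(2*Real.pi), F (cpt r θ))
      = (2*(Real.pi:ℂ)) * F 0 := by
  have hd : DifferentiableOn ℂ F (closedBall (0:ℂ) r) :=
    fun w hw => ((hF w hw).differentiableAt).differentiableWithinAt
  have h := hd.circleIntegral_sub_inv_smul (w := 0) (mem_ball_self hr)
  rw [circleIntegral] at h
  have hne : ∀ θ : ℝ, circleMap 0 r θ ≠ 0 := fun θ => circleMap_ne_center hr.ne'
  have hint : ∀ θ : ℝ, deriv (circleMap 0 r) θ • ((circleMap 0 r θ - 0)⁻¹ • F (circleMap 0 r θ))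
      = Complex.I * F (circleMap 0 r θ) := by
    intro θ
    rw [deriv_circleMap]
    simp only [smul_eq_mul, sub_zero]
    field_simp [hne θ]
  rw [intervalIntegral.integral_congr (fun θ _ => hint θ)] at h
  rw [intervalIntegral.integral_const_mul] at h
  have h2 : Complex.I * (∫ θ in (0:ℝ)..(2*Real.pi), F (circleMap 0 r θ))
      = Complex.I * ((2*(Real.pi:ℂ)) * F 0) := by
    rw [h]; simp [smul_eq_mul]; ring
  have := mul_left_cancel₀ Complex.I_ne_zero h2
  simpa [circleMap_zero, cpt] using this

lemma trig_approx {r : ℝ} (hr : 0 < r) {W : ℂ → ℝ}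
    (hW : ContinuousOn W (Metric.sphere (0:ℂ) r)) {ε : ℝ} (hε : 0 < ε) :
    ∃ g : ℂ → ℂ, AnalyticOnNhd ℂ g Set.univ ∧
      ∀ θ : ℝ, |W (cpt r θ) - (g (cpt r θ)).re| ≤ ε := by
  haveI : Fact (0 < 2 * Real.pi) := ⟨Real.two_pi_pos⟩
  have hrC : (r : ℂ) ≠ 0 := Complex.ofReal_ne_zero.mpr hr.ne'
  have hmem : ∀ x : AddCircle (2*Real.pi),
      (r:ℂ) * (AddCircle.toCircle x : ℂ) ∈ Metric.sphere (0:ℂ) r := by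
    intro x
    simp only [mem_sphere_iff_norm, sub_zero, norm_mul,
      Complex.norm_real, Real.norm_eq_abs, Circle.norm_coe, mul_one, abs_of_pos hr]
  have hcont : Continuous fun x : AddCircle (2*Real.pi) => W ((r:ℂ) * (AddCircle.toCircle x : ℂ)) :=
    hW.comp_continuous
      (continuous_const.mul (continuous_subtype_val.comp AddCircle.continuous_toCircle)) hmem
  set V' : C(AddCircle (2*Real.pi), ℂ) :=
    ⟨fun x => ((W ((r:ℂ) * (AddCircle.toCircle x : ℂ)) : ℝ) : ℂ),
      Complex.continuous_ofReal.comp hcont⟩ with hV'def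
  have hV' : V' ∈ closure ((Submodule.span ℂ
      (Set.range (fourier (T := 2*Real.pi)))) : Set C(AddCircle (2*Real.pi), ℂ)) := by
    have h1 : V' ∈ (Submodule.span ℂ
        (Set.range (fourier (T := 2*Real.pi)))).topologicalClosure := by
      rw [span_fourier_closure_eq_top]; exact Submodule.mem_top
    exact h1
  obtain ⟨h, hhmem, hdist⟩ := Metric.mem_closure_iff.mp hV' ε hε
  obtain ⟨c, hc⟩ := Finsupp.mem_span_range_iff_exists_finsupp.mp hhmem
  classical
  set g : ℂ → ℂ := fun w => ∑ k ∈ c.support,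
    ((if 0 ≤ k then c k else (starRingEnd ℂ) (c k)) / (r:ℂ)^(k.natAbs)) * w ^ (k.natAbs)
    with hgdef
  refine ⟨g, ?_, ?_⟩
  · exact Finset.analyticOnNhd_fun_sum _ (fun k _ =>
      analyticOnNhd_const.mul ((analyticOnNhd_id).pow _))
  · intro θ
    show |W ((r:ℂ) * Complex.exp ((θ:ℂ) * Complex.I))
      - (g ((r:ℂ) * Complex.exp ((θ:ℂ) * Complex.I))).re| ≤ ε
    set z : ℂ := (r:ℂ) * Complex.exp ((θ:ℂ) * Complex.I) with hzdef
    have hcirc : (AddCircle.toCircle ((θ : ℝ) : AddCircle (2*Real.pi)) : ℂ)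
        = Complex.exp ((θ:ℂ) * Complex.I) := by
      rw [AddCircle.toCircle_apply_mk, Circle.coe_exp]
      congr 1
      rw [div_self (by positivity : (2*Real.pi : ℝ) ≠ 0)]
      push_cast
      ring
    have hfour : ∀ k : ℤ, fourier (T := 2*Real.pi) k ((θ : ℝ) : AddCircle (2*Real.pi))
        = Complex.exp ((k:ℂ) * θ * Complex.I) := by
      intro k
      rw [fourier_coe_apply]
      congr 1
      have hπ : (Real.pi : ℂ) ≠ 0 := Complex.ofReal_ne_zero.mpr Real.pi_ne_zero
      push_cast
      field_simp
    have hh : h ((θ : ℝ) : AddCircle (2*Real.pi))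
        = ∑ k ∈ c.support, c k * Complex.exp ((k:ℂ) * θ * Complex.I) := by
      rw [← hc]
      have : (c.sum fun i a => a • fourier (T := 2*Real.pi) i)
          = ∑ k ∈ c.support, c k • fourier (T := 2*Real.pi) k := rfl
      rw [this, ContinuousMap.sum_apply]
      exact Finset.sum_congr rfl fun k _ => by
        rw [ContinuousMap.smul_apply, smul_eq_mul, hfour]
    have hterm : ∀ k : ℤ,
        (((if 0 ≤ k then c k else (starRingEnd ℂ) (c k)) / (r:ℂ)^(k.natAbs)) * z ^ (k.natAbs)).re
          = (c k * Complex.exp ((k:ℂ) * θ * Complex.I)).re := by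
      intro k
      have hzpow : z ^ (k.natAbs) = (r:ℂ)^(k.natAbs)
          * Complex.exp ((k.natAbs : ℂ) * (θ:ℂ) * Complex.I) := by
        rw [hzdef, mul_pow, ← Complex.exp_nat_mul, mul_assoc]
      rw [hzpow]
      have hrpow : ((r:ℂ))^(k.natAbs) ≠ 0 := pow_ne_zero _ hrC
      rw [div_mul_eq_mul_div, mul_comm ((r:ℂ)^(k.natAbs)) _, mul_assoc,
        mul_div_assoc, mul_div_cancel_right₀ _ hrpow]
      by_cases hk : 0 ≤ k
      · rw [if_pos hk]
        congr 2
        have hcast : ((k.natAbs : ℕ) : ℂ) = (k : ℂ) := by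
          have h2 : (k.natAbs : ℤ) = k := Int.natAbs_of_nonneg hk
          calc ((k.natAbs : ℕ) : ℂ) = ((k.natAbs : ℤ) : ℂ) := (Int.cast_natCast k.natAbs).symm
            _ = (k : ℂ) := by rw [h2]
        rw [hcast]
        congr 1
        ring
      · rw [if_neg hk]
        have hnat : ((k.natAbs : ℕ) : ℂ) = -(k : ℂ) := by
          have h2 : (k.natAbs : ℤ) = -k := Int.ofNat_natAbs_of_nonpos (le_of_not_ge hk)
          calc ((k.natAbs : ℕ) : ℂ) = ((k.natAbs : ℤ) : ℂ) := (Int.cast_natCast k.natAbs).symm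
            _ = -(k : ℂ) := by rw [h2]; push_cast; ring
        have hconj : Complex.exp ((k.natAbs : ℂ) * (θ:ℂ) * Complex.I)
            = (starRingEnd ℂ) (Complex.exp ((k:ℂ) * θ * Complex.I)) := by
          rw [← Complex.exp_conj]
          congr 1
          simp only [map_mul, Complex.conj_I, Complex.conj_ofReal, map_intCast]
          rw [hnat]; ring
        rw [show ((k.natAbs : ℂ) * ((θ:ℂ) * Complex.I)) = ((k.natAbs : ℂ) * (θ:ℂ) * Complex.I)
          from (mul_assoc _ _ _).symm, hconj, ← map_mul, Complex.conj_re]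
    have hgre : (g z).re = (h ((θ : ℝ) : AddCircle (2*Real.pi))).re := by
      rw [hgdef, hh]
      simp only [Complex.re_sum]
      exact Finset.sum_congr rfl fun k _ => hterm k
    have hVre : W z = (V' ((θ : ℝ) : AddCircle (2*Real.pi))).re := by
      rw [hV'def]
      simp only [ContinuousMap.coe_mk, Complex.ofReal_re, hcirc, hzdef]
    rw [hVre, hgre]
    have h1 : |((V' ((θ : ℝ) : AddCircle (2*Real.pi))) - (h ((θ : ℝ) : AddCircle (2*Real.pi)))).re|
        ≤ ‖(V' ((θ : ℝ) : AddCircle (2*Real.pi))) - (h ((θ : ℝ) : AddCircle (2*Real.pi)))‖ :=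
      Complex.abs_re_le_norm _
    rw [Complex.sub_re] at h1
    refine le_trans h1 (le_trans ?_ hdist.le)
    rw [← Complex.dist_eq]
    exact ContinuousMap.dist_apply_le_dist _

lemma contOn_comp_cpt {r : ℝ} (hr : 0 < r) {X : Type*} [TopologicalSpace X] {f : ℂ → X}
    (hf : ContinuousOn f (Metric.closedBall (0:ℂ) r)) :
    Continuous (fun θ : ℝ => f (cpt r θ)) :=
  hf.comp_continuous (cpt_cont r) (cpt_mem_closedBall hr)

lemma analyticAt_contOn {r : ℝ} {F : ℂ → ℂ}
    (hF : ∀ w ∈ Metric.closedBall (0:ℂ) r, AnalyticAt ℂ F w) :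
    ContinuousOn F (Metric.closedBall (0:ℂ) r) :=
  fun w hw => (hF w hw).continuousAt.continuousWithinAt

lemma mvp_re {r : ℝ} (hr : 0 < r) {g : ℂ → ℂ}
    (hg : ∀ w ∈ Metric.closedBall (0:ℂ) r, AnalyticAt ℂ g w) :
    (∫ θ in (0:ℝ)..(2*Real.pi), (g (cpt r θ)).re) = (2*Real.pi) * (g 0).re := by
  have h := mvp_analytic hr hg
  have hgi : IntervalIntegrable (fun θ => g (cpt r θ)) volume 0 (2*Real.pi) :=
    (contOn_comp_cpt hr (analyticAt_contOn hg)).intervalIntegrable _ _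
  have h2 := Complex.reCLM.intervalIntegral_comp_comm hgi
  have h3 : (∫ θ in (0:ℝ)..(2*Real.pi), (g (cpt r θ)).re)
      = Complex.reCLM (∫ θ in (0:ℝ)..(2*Real.pi), g (cpt r θ)) := h2
  rw [h3, h]
  simp [Complex.mul_re]

lemma core_log {r : ℝ} (hr : 0 < r) {F : ℂ → ℂ}
    (hF : ∀ w ∈ Metric.closedBall (0:ℂ) r, AnalyticAt ℂ F w)
    (hF0 : ∀ w ∈ Metric.closedBall (0:ℂ) r, F w ≠ 0) :
    Real.log (‖F 0‖) ≤
      (1/(2*Real.pi)) * ∫ θ in (0:ℝ)..(2*Real.pi), Real.log (‖F (cpt r θ)‖) := by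
  have hπ : (0:ℝ) < Real.pi := Real.pi_pos
  have hFc : ContinuousOn F (Metric.closedBall (0:ℂ) r) := analyticAt_contOn hF
  have hFpos : ∀ θ : ℝ, 0 < ‖F (cpt r θ)‖ :=
    fun θ => norm_pos_iff.mpr (hF0 _ (cpt_mem_closedBall hr θ))
  have hlogc : Continuous (fun θ : ℝ => Real.log (‖F (cpt r θ)‖)) := by
    apply Continuous.log
    · exact continuous_norm.comp (contOn_comp_cpt hr hFc)
    · exact fun θ => (hFpos θ).ne'
  apply le_of_forall_pos_le_add
  intro ε hε
  have hW : ContinuousOn (fun z => -Real.log (‖F z‖)) (Metric.sphere (0:ℂ) r) := by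
    apply ContinuousOn.neg
    apply ContinuousOn.log
    · exact continuous_norm.comp_continuousOn (hFc.mono sphere_subset_closedBall)
    · exact fun z hz => (norm_ne_zero_iff.mpr (hF0 z (sphere_subset_closedBall hz)))
  obtain ⟨g, hg_an, hg_ap⟩ := trig_approx hr hW (half_pos hε)
  have hg_cb : ∀ w ∈ Metric.closedBall (0:ℂ) r, AnalyticAt ℂ g w := fun w _ => hg_an w trivial
  have hgc : Continuous (fun θ : ℝ => (g (cpt r θ)).re) :=
    Complex.continuous_re.comp (contOn_comp_cpt hr (analyticAt_contOn hg_cb))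
  set G : ℂ → ℂ := fun w => F w * Complex.exp (g w) with hGdef
  have hGa : ∀ w ∈ Metric.closedBall (0:ℂ) r, AnalyticAt ℂ G w :=
    fun w hw => (hF w hw).mul ((hg_cb w hw).cexp)
  have hMVP := mvp_analytic hr hGa
  have hGcont : Continuous (fun θ : ℝ => G (cpt r θ)) := contOn_comp_cpt hr (analyticAt_contOn hGa)
  -- ∫ |G| bound
  have habs : ∀ θ : ℝ, ‖G (cpt r θ)‖ ≤ Real.exp (ε/2) := by
    intro θ
    have h1 := hg_ap θ
    have h2 : (g (cpt r θ)).re ≤ -Real.log (‖F (cpt r θ)‖) + ε/2 := by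
      cases abs_le.mp h1 with
      | intro hl hu => linarith
    have : ‖G (cpt r θ)‖
        = ‖F (cpt r θ)‖ * Real.exp ((g (cpt r θ)).re) := by
      rw [hGdef]; simp [norm_mul, Complex.norm_exp]
    rw [this]
    calc ‖F (cpt r θ)‖ * Real.exp ((g (cpt r θ)).re)
        ≤ ‖F (cpt r θ)‖ * Real.exp (-Real.log (‖F (cpt r θ)‖) + ε/2) :=
          mul_le_mul_of_nonneg_left (Real.exp_le_exp.mpr h2) (norm_nonneg _)
      _ = Real.exp (ε/2) := by
          rw [Real.exp_add, Real.exp_neg, Real.exp_log (hFpos θ), ← mul_assoc]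
          rw [mul_inv_cancel₀ (hFpos θ).ne', one_mul]
  have hintabs : (∫ θ in (0:ℝ)..(2*Real.pi), ‖G (cpt r θ)‖)
      ≤ (2*Real.pi) * Real.exp (ε/2) := by
    have := intervalIntegral.integral_mono_on Real.two_pi_pos.le
      ((continuous_norm.comp hGcont).intervalIntegrable _ _)
      (intervalIntegrable_const (μ := volume) (c := Real.exp (ε/2)))
      (fun θ _ => habs θ)
    simpa [smul_eq_mul] using this
  have hnorm : (2*Real.pi) * ‖G 0‖
      ≤ ∫ θ in (0:ℝ)..(2*Real.pi), ‖G (cpt r θ)‖ := by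
    have h1 : ‖∫ θ in (0:ℝ)..(2*Real.pi), G (cpt r θ)‖
        = (2*Real.pi) * ‖G 0‖ := by
      rw [hMVP, norm_mul]
      congr 1
      simp [Complex.norm_real, abs_of_pos Real.two_pi_pos]
      exact Real.pi_pos.le
    calc (2*Real.pi) * ‖G 0‖
        = ‖∫ θ in (0:ℝ)..(2*Real.pi), G (cpt r θ)‖ := by
          rw [h1]
      _ ≤ ∫ θ in (0:ℝ)..(2*Real.pi), ‖G (cpt r θ)‖ :=
          intervalIntegral.norm_integral_le_integral_norm Real.two_pi_pos.le
      _ = ∫ θ in (0:ℝ)..(2*Real.pi), ‖G (cpt r θ)‖ := by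
          simp
  have hG0 : ‖G 0‖ ≤ Real.exp (ε/2) := by
    nlinarith [hintabs, hnorm, Real.two_pi_pos]
  have hG0' : ‖F 0‖ * Real.exp ((g 0).re) ≤ Real.exp (ε/2) := by
    have : ‖G 0‖ = ‖F 0‖ * Real.exp ((g 0).re) := by
      rw [hGdef]; simp [norm_mul, Complex.norm_exp]
    linarith [this ▸ hG0]
  have hF0pos : 0 < ‖F 0‖ :=
    norm_pos_iff.mpr (hF0 0 (mem_closedBall_self hr.le))
  have hlog0 : Real.log (‖F 0‖) + (g 0).re ≤ ε/2 := by
    have h1 : Real.log (‖F 0‖ * Real.exp ((g 0).re)) ≤ Real.log (Real.exp (ε/2)) :=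
      Real.log_le_log (by positivity) hG0'
    rw [Real.log_mul hF0pos.ne' (Real.exp_pos _).ne', Real.log_exp, Real.log_exp] at h1
    exact h1
  -- lower bound on (g 0).re
  have hge : ∀ θ : ℝ, -Real.log (‖F (cpt r θ)‖) - ε/2 ≤ (g (cpt r θ)).re := by
    intro θ
    have h1 := abs_le.mp (hg_ap θ)
    linarith [h1.1, h1.2]
  have hintge : -(∫ θ in (0:ℝ)..(2*Real.pi), Real.log (‖F (cpt r θ)‖))
      - (2*Real.pi) * (ε/2) ≤ (2*Real.pi) * (g 0).re := by
    rw [← mvp_re hr hg_cb]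
    have h2 := intervalIntegral.integral_mono_on Real.two_pi_pos.le
      ((hlogc.fun_neg.fun_sub continuous_const).intervalIntegrable (μ := volume) _ _)
      (hgc.intervalIntegrable _ _)
      (fun θ _ => by simpa [sub_eq_add_neg] using hge θ)
    have h3 : (∫ θ in (0:ℝ)..(2*Real.pi), (-Real.log (‖F (cpt r θ)‖) - ε/2))
        = -(∫ θ in (0:ℝ)..(2*Real.pi), Real.log (‖F (cpt r θ)‖)) - (2*Real.pi)*(ε/2) := by
      rw [intervalIntegral.integral_sub (hlogc.fun_neg.intervalIntegrable _ _) (intervalIntegrable_const (μ := volume) (c := ε/2)),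
        intervalIntegral.integral_neg, intervalIntegral.integral_const]
      simp [smul_eq_mul]
    rw [h3] at h2
    exact h2
  set Ival := ∫ θ in (0:ℝ)..(2*Real.pi), Real.log (‖F (cpt r θ)‖) with hIval
  have hIeq : Ival = (2*Real.pi) * ((1/(2*Real.pi)) * Ival) := by field_simp
  have hre : -((g 0).re) ≤ (1/(2*Real.pi)) * Ival + ε/2 := by nlinarith [hπ]
  linarith

lemma core_sq {r : ℝ} (hr : 0 < r) {F : ℂ → ℂ} {ψ : ℂ → ℝ}
    (hF : ∀ w ∈ Metric.closedBall (0:ℂ) r, AnalyticAt ℂ F w)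
    (hψ : ContinuousOn ψ (Metric.closedBall (0:ℂ) r))
    (hmean : -ψ 0 ≤ (1/(2*Real.pi)) * ∫ θ in (0:ℝ)..(2*Real.pi), -ψ (cpt r θ)) :
    ‖F 0‖^2 * Real.exp (-ψ 0)
      ≤ (1/(2*Real.pi)) * ∫ θ in (0:ℝ)..(2*Real.pi),
          ‖F (cpt r θ)‖^2 * Real.exp (-ψ (cpt r θ)) := by
  have hπ : (0:ℝ) < Real.pi := Real.pi_pos
  have hψc : Continuous (fun θ : ℝ => ψ (cpt r θ)) := contOn_comp_cpt hr hψ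
  have hFc : ContinuousOn F (Metric.closedBall (0:ℂ) r) := analyticAt_contOn hF
  have hFcc : Continuous (fun θ : ℝ => ‖F (cpt r θ)‖) :=
    continuous_norm.comp (contOn_comp_cpt hr hFc)
  have hucont : Continuous (fun θ : ℝ => ‖F (cpt r θ)‖^2 * Real.exp (-ψ (cpt r θ))) :=
    (hFcc.pow 2).mul (Real.continuous_exp.comp hψc.neg)
  set C : ℝ := (1/(2*Real.pi)) * ∫ θ in (0:ℝ)..(2*Real.pi),
      ‖F (cpt r θ)‖^2 * Real.exp (-ψ (cpt r θ)) with hCdef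
  have hC0 : 0 ≤ C := mul_nonneg (by positivity)
    (intervalIntegral.integral_nonneg Real.two_pi_pos.le (fun u _ => by positivity))
  have key : ∀ ε : ℝ, 0 < ε →
      ‖F 0‖^2 * Real.exp (-ψ 0) ≤ Real.exp (2*ε) * C := by
    intro ε hε
    obtain ⟨g, hg_an, hg_ap⟩ := trig_approx hr (W := fun z => ψ z / 2)
      ((hψ.mono sphere_subset_closedBall).div_const 2) (half_pos hε)
    have hg_cb : ∀ w ∈ Metric.closedBall (0:ℂ) r, AnalyticAt ℂ g w :=
      fun w _ => hg_an w trivial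
    have hgc : Continuous (fun θ : ℝ => (g (cpt r θ)).re) :=
      Complex.continuous_re.comp (contOn_comp_cpt hr (analyticAt_contOn hg_cb))
    set G : ℂ → ℂ := fun w => F w * Complex.exp (-g w) with hGdef
    have hGa : ∀ w ∈ Metric.closedBall (0:ℂ) r, AnalyticAt ℂ G w :=
      fun w hw => (hF w hw).mul (((hg_cb w hw).neg).cexp)
    have hGcont : Continuous (fun θ : ℝ => G (cpt r θ)) :=
      contOn_comp_cpt hr (analyticAt_contOn hGa)
    have hMVP := mvp_analytic hr hGa
    set A : ℝ → ℝ := fun θ => ‖G (cpt r θ)‖ with hAdef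
    have hAc : Continuous A := continuous_norm.comp hGcont
    have hAeq : ∀ θ : ℝ, A θ = ‖F (cpt r θ)‖ * Real.exp (-(g (cpt r θ)).re) := by
      intro θ
      simp [hAdef, hGdef, norm_mul, Complex.norm_exp, Complex.neg_re]
    have hnorm : (2*Real.pi) * ‖G 0‖
        ≤ ∫ θ in (0:ℝ)..(2*Real.pi), A θ := by
      have h1 : ‖∫ θ in (0:ℝ)..(2*Real.pi), G (cpt r θ)‖
          = (2*Real.pi) * ‖G 0‖ := by
        rw [hMVP, norm_mul]
        congr 1
        simp [Complex.norm_real, abs_of_pos Real.two_pi_pos]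
        exact Real.pi_pos.le
      calc (2*Real.pi) * ‖G 0‖
          = ‖∫ θ in (0:ℝ)..(2*Real.pi), G (cpt r θ)‖ := by rw [h1]
        _ ≤ ∫ θ in (0:ℝ)..(2*Real.pi), ‖G (cpt r θ)‖ :=
            intervalIntegral.norm_integral_le_integral_norm Real.two_pi_pos.le
        _ = ∫ θ in (0:ℝ)..(2*Real.pi), A θ := by simp [hAdef]
    have hG0le : ‖G 0‖ ≤ (1/(2*Real.pi)) * ∫ θ in (0:ℝ)..(2*Real.pi), A θ := by
      have h2 := mul_le_mul_of_nonneg_left hnorm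
        (by positivity : (0:ℝ) ≤ 1/(2*Real.pi))
      calc ‖G 0‖ = (1/(2*Real.pi)) * ((2*Real.pi) * ‖G 0‖) := by
            field_simp
        _ ≤ (1/(2*Real.pi)) * ∫ θ in (0:ℝ)..(2*Real.pi), A θ := h2
    have hG0sq : ‖G 0‖^2
        ≤ (1/(2*Real.pi)) * ∫ θ in (0:ℝ)..(2*Real.pi), (A θ)^2 :=
      le_trans (pow_le_pow_left₀ (norm_nonneg _) hG0le 2) (avg_sq_le hAc)
    have hptw : ∀ θ ∈ Set.Icc (0:ℝ) (2*Real.pi), (A θ)^2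
        ≤ Real.exp ε * (‖F (cpt r θ)‖^2 * Real.exp (-ψ (cpt r θ))) := by
      intro θ _
      have h1 := abs_le.mp (hg_ap θ)
      have hb : Real.exp (-(g (cpt r θ)).re) ^ 2 ≤ Real.exp ε * Real.exp (-ψ (cpt r θ)) := by
        rw [sq, ← Real.exp_add, ← Real.exp_add]
        apply Real.exp_le_exp.mpr
        linarith [h1.2]
      calc (A θ)^2 = ‖F (cpt r θ)‖^2 * Real.exp (-(g (cpt r θ)).re)^2 := by
            rw [hAeq θ, mul_pow]
        _ ≤ ‖F (cpt r θ)‖^2 * (Real.exp ε * Real.exp (-ψ (cpt r θ))) :=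
            mul_le_mul_of_nonneg_left hb (by positivity)
        _ = Real.exp ε * (‖F (cpt r θ)‖^2 * Real.exp (-ψ (cpt r θ))) := by ring
    have hint2 : (1/(2*Real.pi)) * (∫ θ in (0:ℝ)..(2*Real.pi), (A θ)^2) ≤ Real.exp ε * C := by
      have h3 := intervalIntegral.integral_mono_on Real.two_pi_pos.le
        ((hAc.fun_pow 2).intervalIntegrable (μ := volume) _ _)
        ((continuous_const.fun_mul hucont).intervalIntegrable _ _) hptw
      rw [intervalIntegral.integral_const_mul] at h3
      calc (1/(2*Real.pi)) * (∫ θ in (0:ℝ)..(2*Real.pi), (A θ)^2)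
          ≤ (1/(2*Real.pi)) * (Real.exp ε * ∫ θ in (0:ℝ)..(2*Real.pi),
              ‖F (cpt r θ)‖^2 * Real.exp (-ψ (cpt r θ))) :=
            mul_le_mul_of_nonneg_left h3 (by positivity)
        _ = Real.exp ε * C := by rw [hCdef]; ring
    -- upper bound for (g 0).re
    have hg0 : (g 0).re ≤ ψ 0 / 2 + ε/2 := by
      have hmg := mvp_re hr hg_cb
      have hup : ∀ θ ∈ Set.Icc (0:ℝ) (2*Real.pi),
          (g (cpt r θ)).re ≤ ψ (cpt r θ)/2 + ε/2 := by
        intro θ _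
        have h1 := abs_le.mp (hg_ap θ)
        linarith [h1.1]
      have h4 := intervalIntegral.integral_mono_on Real.two_pi_pos.le
        (hgc.intervalIntegrable (μ := volume) _ _)
        (((hψc.div_const 2).fun_add continuous_const).intervalIntegrable _ _) hup
      rw [hmg, intervalIntegral.integral_add ((hψc.div_const 2).intervalIntegrable _ _)
        intervalIntegrable_const, intervalIntegral.integral_div,
        intervalIntegral.integral_const] at h4
      have hIψ : (∫ θ in (0:ℝ)..(2*Real.pi), ψ (cpt r θ)) ≤ (2*Real.pi) * ψ 0 := by
        have h5 : (∫ θ in (0:ℝ)..(2*Real.pi), -ψ (cpt r θ))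
            = -∫ θ in (0:ℝ)..(2*Real.pi), ψ (cpt r θ) := intervalIntegral.integral_neg
        rw [h5] at hmean
        have h6 : (2*Real.pi) * ((1/(2*Real.pi)) * (-∫ θ in (0:ℝ)..(2*Real.pi), ψ (cpt r θ)))
            = -∫ θ in (0:ℝ)..(2*Real.pi), ψ (cpt r θ) := by
          field_simp
        have h7 := mul_le_mul_of_nonneg_left hmean (by positivity : (0:ℝ) ≤ 2*Real.pi)
        rw [h6] at h7
        linarith
      simp only [smul_eq_mul, sub_zero] at h4
      nlinarith [h4, hIψ, hπ]
    -- final chain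
    have hG0eq : ‖G 0‖ = ‖F 0‖ * Real.exp (-(g 0).re) := by
      simp [hGdef, norm_mul, Complex.norm_exp, Complex.neg_re]
    have hstep : Real.exp (-ψ 0) ≤ Real.exp ε * Real.exp (-(g 0).re)^2 := by
      rw [sq, ← Real.exp_add, ← Real.exp_add]
      apply Real.exp_le_exp.mpr
      linarith
    calc ‖F 0‖^2 * Real.exp (-ψ 0)
        ≤ ‖F 0‖^2 * (Real.exp ε * Real.exp (-(g 0).re)^2) :=
          mul_le_mul_of_nonneg_left hstep (by positivity)
      _ = Real.exp ε * (‖G 0‖)^2 := by rw [hG0eq, mul_pow]; ring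
      _ ≤ Real.exp ε * ((1/(2*Real.pi)) * ∫ θ in (0:ℝ)..(2*Real.pi), (A θ)^2) :=
          mul_le_mul_of_nonneg_left hG0sq (Real.exp_pos _).le
      _ ≤ Real.exp ε * (Real.exp ε * C) :=
          mul_le_mul_of_nonneg_left hint2 (Real.exp_pos _).le
      _ = Real.exp (2*ε) * C := by rw [← mul_assoc, ← Real.exp_add]; ring_nf
  have htend : Filter.Tendsto (fun ε : ℝ => Real.exp (2*ε) * C)
      (nhdsWithin 0 (Set.Ioi 0)) (nhds C) := by
    have h6 : Filter.Tendsto (fun ε : ℝ => Real.exp (2*ε) * C) (nhds 0)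
        (nhds (Real.exp (2*0) * C)) :=
      ((Real.continuous_exp.comp (continuous_const.mul continuous_id)).mul
        continuous_const).tendsto 0
    simpa using h6.mono_left nhdsWithin_le_nhds
  refine ge_of_tendsto htend ?_
  filter_upwards [self_mem_nhdsWithin] with ε hε using key ε hε

end PshHelpers

/-- A function `u` is plurisubharmonic on `Ω ⊆ ℂⁿ` if it is upper semicontinuous on `Ω`
and satisfies the sub-mean value inequality on every complex line segment contained in `Ω`. -/
def Psh {n : ℕ} (Ω : Set (EuclideanSpace ℂ (Fin n))) (u : EuclideanSpace ℂ (Fin n) → ℝ) : Prop :=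
  UpperSemicontinuousOn u Ω ∧
  ∀ a ∈ Ω, ∀ ξ : EuclideanSpace ℂ (Fin n), ∀ r : ℝ, 0 < r →
    (∀ w : ℂ, ‖w‖ ≤ r → a + w • ξ ∈ Ω) →
    IntegrableOn (fun θ : ℝ => u (a + (((r : ℂ) * Complex.exp ((θ : ℂ) * Complex.I))) • ξ))
      (Set.Icc 0 (2 * Real.pi)) volume ∧
    u a ≤ (1 / (2 * Real.pi)) *
      ∫ θ in (0:ℝ)..(2 * Real.pi),
        u (a + (((r : ℂ) * Complex.exp ((θ : ℂ) * Complex.I))) • ξ)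

/-- For a continuous weight `φ`, the following are equivalent: `-φ` is psh;
`‖s‖² e^{-φ}` is psh on `U` for every holomorphic `s : U → ℂ` on every open `U ⊆ Ω`;
and `2 log ‖s‖ - φ` is psh on `U` for every nowhere-vanishing holomorphic `s` on `U`. -/
theorem psh_neg_weight_iff_sections {n : ℕ} (Ω : Set (EuclideanSpace ℂ (Fin n)))
    (hΩ : IsOpen Ω) (φ : EuclideanSpace ℂ (Fin n) → ℝ) (hφ : ContinuousOn φ Ω) :
    (Psh Ω (fun z => -φ z) ↔
      ∀ U : Set (EuclideanSpace ℂ (Fin n)), U ⊆ Ω → IsOpen U →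
        ∀ s : EuclideanSpace ℂ (Fin n) → ℂ, AnalyticOnNhd ℂ s U →
          Psh U (fun z => ‖s z‖ ^ 2 * Real.exp (-φ z))) ∧
    (Psh Ω (fun z => -φ z) ↔
      ∀ U : Set (EuclideanSpace ℂ (Fin n)), U ⊆ Ω → IsOpen U →
        ∀ s : EuclideanSpace ℂ (Fin n) → ℂ, AnalyticOnNhd ℂ s U → (∀ z ∈ U, s z ≠ 0) →
          Psh U (fun z => 2 * Real.log ‖s z‖ - φ z)) := by
  have hπ : (0:ℝ) < Real.pi := Real.pi_pos
  -- generic facts about the affine line map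
  have hline_an : ∀ (a ξ : EuclideanSpace ℂ (Fin n)) (w : ℂ),
      AnalyticAt ℂ (fun w : ℂ => a + w • ξ) w := by
    intro a ξ w
    exact analyticAt_const.add (((ContinuousLinearMap.id ℂ ℂ).smulRight ξ).analyticAt w)
  have hline_c : ∀ (a ξ : EuclideanSpace ℂ (Fin n)),
      Continuous (fun w : ℂ => a + w • ξ) := by
    intro a ξ
    exact continuous_const.add (continuous_id.smul continuous_const)
  -- (A → B)
  have hAB : Psh Ω (fun z => -φ z) →
      ∀ U : Set (EuclideanSpace ℂ (Fin n)), U ⊆ Ω → IsOpen U →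
      ∀ s : EuclideanSpace ℂ (Fin n) → ℂ, AnalyticOnNhd ℂ s U →
        Psh U (fun z => ‖s z‖ ^ 2 * Real.exp (-φ z)) := by
    intro hA U hUΩ hU s hs
    have hucont : ContinuousOn (fun z => ‖s z‖ ^ 2 * Real.exp (-φ z)) U :=
      ((hs.continuousOn.norm).pow 2).mul
        (Real.continuous_exp.comp_continuousOn (hφ.mono hUΩ).neg)
    refine ⟨hucont.upperSemicontinuousOn, ?_⟩
    intro a ha ξ r hr hsub
    have hmaps : ∀ w ∈ Metric.closedBall (0:ℂ) r, a + w • ξ ∈ U := by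
      intro w hw
      exact hsub w (by simpa using mem_closedBall_zero_iff.mp hw)
    have hγcpt : Continuous (fun θ : ℝ => a + (cpt r θ) • ξ) :=
      (hline_c a ξ).comp (cpt_cont r)
    have hmapsθ : ∀ θ : ℝ, a + (cpt r θ) • ξ ∈ U := fun θ => hsub _ (cpt_abs_le hr θ)
    have hcontθ : Continuous (fun θ : ℝ =>
        ‖s (a + (cpt r θ) • ξ)‖ ^ 2 * Real.exp (-φ (a + (cpt r θ) • ξ))) :=
      hucont.comp_continuous hγcpt hmapsθ
    constructor
    · exact hcontθ.continuousOn.integrableOn_Icc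
    · have hF : ∀ w ∈ Metric.closedBall (0:ℂ) r,
          AnalyticAt ℂ (fun w : ℂ => s (a + w • ξ)) w := by
        intro w hw
        have h := AnalyticAt.comp (f := fun w : ℂ => a + w • ξ) (x := w)
          (hs _ (hmaps w hw)) (hline_an a ξ w)
        exact h
      have hψ : ContinuousOn (fun w : ℂ => φ (a + w • ξ)) (Metric.closedBall (0:ℂ) r) :=
        hφ.comp (hline_c a ξ).continuousOn (fun w hw => hUΩ (hmaps w hw))
      have hmean0 := (hA.2 a (hUΩ ha) ξ r hr (fun w hw => hUΩ (hsub w hw))).2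
      have hmean : -(fun w : ℂ => φ (a + w • ξ)) 0 ≤ (1/(2*Real.pi)) *
          ∫ θ in (0:ℝ)..(2*Real.pi), -(fun w : ℂ => φ (a + w • ξ)) (cpt r θ) := by
        simpa [cpt] using hmean0
      have hcore := core_sq hr hF hψ hmean
      simpa [cpt] using hcore
  -- (A → C)
  have hAC : Psh Ω (fun z => -φ z) →
      ∀ U : Set (EuclideanSpace ℂ (Fin n)), U ⊆ Ω → IsOpen U →
      ∀ s : EuclideanSpace ℂ (Fin n) → ℂ, AnalyticOnNhd ℂ s U → (∀ z ∈ U, s z ≠ 0) →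
        Psh U (fun z => 2 * Real.log ‖s z‖ - φ z) := by
    intro hA U hUΩ hU s hs hs0
    have hucont : ContinuousOn (fun z => 2 * Real.log ‖s z‖ - φ z) U := by
      apply ContinuousOn.sub
      · exact continuousOn_const.mul
          ((hs.continuousOn.norm).log (fun z hz => norm_ne_zero_iff.mpr (hs0 z hz)))
      · exact hφ.mono hUΩ
    refine ⟨hucont.upperSemicontinuousOn, ?_⟩
    intro a ha ξ r hr hsub
    have hmaps : ∀ w ∈ Metric.closedBall (0:ℂ) r, a + w • ξ ∈ U := by
      intro w hw
      exact hsub w (by simpa using mem_closedBall_zero_iff.mp hw)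
    have hγcpt : Continuous (fun θ : ℝ => a + (cpt r θ) • ξ) :=
      (hline_c a ξ).comp (cpt_cont r)
    have hmapsθ : ∀ θ : ℝ, a + (cpt r θ) • ξ ∈ U := fun θ => hsub _ (cpt_abs_le hr θ)
    have hcontθ : Continuous (fun θ : ℝ =>
        2 * Real.log ‖s (a + (cpt r θ) • ξ)‖ - φ (a + (cpt r θ) • ξ)) :=
      hucont.comp_continuous hγcpt hmapsθ
    constructor
    · exact hcontθ.continuousOn.integrableOn_Icc
    · have hF : ∀ w ∈ Metric.closedBall (0:ℂ) r,
          AnalyticAt ℂ (fun w : ℂ => s (a + w • ξ)) w := by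
        intro w hw
        have h := AnalyticAt.comp (f := fun w : ℂ => a + w • ξ) (x := w)
          (hs _ (hmaps w hw)) (hline_an a ξ w)
        exact h
      have hF0 : ∀ w ∈ Metric.closedBall (0:ℂ) r, s (a + w • ξ) ≠ 0 :=
        fun w hw => hs0 _ (hmaps w hw)
      have hlog0 := core_log hr hF hF0
      have hlog : Real.log (‖s a‖) ≤ (1/(2*Real.pi)) *
          ∫ θ in (0:ℝ)..(2*Real.pi), Real.log (‖s (a + (cpt r θ) • ξ)‖) := by
        simpa using hlog0
      have hmean0 := (hA.2 a (hUΩ ha) ξ r hr (fun w hw => hUΩ (hsub w hw))).2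
      have hmean : -φ a ≤ (1/(2*Real.pi)) *
          ∫ θ in (0:ℝ)..(2*Real.pi), -φ (a + (cpt r θ) • ξ) := by
        simpa [cpt] using hmean0
      have hlogc : Continuous (fun θ : ℝ => Real.log (‖s (a + (cpt r θ) • ξ)‖)) := by
        apply Continuous.log
        · exact continuous_norm.comp
            ((hs.continuousOn.comp_continuous hγcpt hmapsθ))
        · exact fun θ => norm_ne_zero_iff.mpr (hs0 _ (hmapsθ θ))
      have hφc : Continuous (fun θ : ℝ => φ (a + (cpt r θ) • ξ)) :=
        (hφ.mono hUΩ).comp_continuous hγcpt hmapsθ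
      have hsplit : (∫ θ in (0:ℝ)..(2*Real.pi),
          (2 * Real.log ‖s (a + (cpt r θ) • ξ)‖ - φ (a + (cpt r θ) • ξ)))
          = 2 * (∫ θ in (0:ℝ)..(2*Real.pi), Real.log (‖s (a + (cpt r θ) • ξ)‖))
            - ∫ θ in (0:ℝ)..(2*Real.pi), φ (a + (cpt r θ) • ξ) := by
        rw [intervalIntegral.integral_sub
          ((continuous_const.fun_mul hlogc).intervalIntegrable (μ := volume) _ _)
          (hφc.intervalIntegrable _ _), intervalIntegral.integral_const_mul]
      have hmean' : -φ a ≤ (1/(2*Real.pi)) *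
          -∫ θ in (0:ℝ)..(2*Real.pi), φ (a + (cpt r θ) • ξ) := by
        rwa [intervalIntegral.integral_neg] at hmean
      show 2 * Real.log ‖s a‖ - φ a ≤ (1/(2*Real.pi)) *
        ∫ θ in (0:ℝ)..(2*Real.pi),
          (2 * Real.log ‖s (a + (cpt r θ) • ξ)‖ - φ (a + (cpt r θ) • ξ))
      rw [hsplit]
      set IL := ∫ θ in (0:ℝ)..(2*Real.pi), Real.log (‖s (a + (cpt r θ) • ξ)‖)
      set IP := ∫ θ in (0:ℝ)..(2*Real.pi), φ (a + (cpt r θ) • ξ)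
      have hring : (1/(2*Real.pi)) * (2 * IL - IP)
          = 2 * ((1/(2*Real.pi)) * IL) + (1/(2*Real.pi)) * (-IP) := by ring
      rw [hring]
      linarith
  -- (C → A)
  have hCA : (∀ U : Set (EuclideanSpace ℂ (Fin n)), U ⊆ Ω → IsOpen U →
      ∀ s : EuclideanSpace ℂ (Fin n) → ℂ, AnalyticOnNhd ℂ s U → (∀ z ∈ U, s z ≠ 0) →
        Psh U (fun z => 2 * Real.log ‖s z‖ - φ z)) → Psh Ω (fun z => -φ z) := by
    intro hC
    have h1 := hC Ω subset_rfl hΩ (fun _ => 1) analyticOnNhd_const (fun z _ => one_ne_zero)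
    have heq : (fun z : EuclideanSpace ℂ (Fin n) => 2 * Real.log ‖(1:ℂ)‖ - φ z)
        = fun z => -φ z := by
      funext z; simp
    rwa [heq] at h1
  -- (B → A)
  have hBA : (∀ U : Set (EuclideanSpace ℂ (Fin n)), U ⊆ Ω → IsOpen U →
      ∀ s : EuclideanSpace ℂ (Fin n) → ℂ, AnalyticOnNhd ℂ s U →
        Psh U (fun z => ‖s z‖ ^ 2 * Real.exp (-φ z))) → Psh Ω (fun z => -φ z) := by
    intro hB
    refine ⟨(hφ.neg).upperSemicontinuousOn, ?_⟩
    intro a ha ξ r hr hsub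
    have hγcpt : Continuous (fun θ : ℝ => a + (cpt r θ) • ξ) :=
      (hline_c a ξ).comp (cpt_cont r)
    have hmapsθ : ∀ θ : ℝ, a + (cpt r θ) • ξ ∈ Ω := fun θ => hsub _ (cpt_abs_le hr θ)
    have hφc : Continuous (fun θ : ℝ => φ (a + (cpt r θ) • ξ)) :=
      hφ.comp_continuous hγcpt hmapsθ
    constructor
    · exact (hφc.neg).continuousOn.integrableOn_Icc
    · by_cases hξ : ξ = 0
      · subst hξ
        have : ∀ θ : ℝ, -φ (a + (cpt r θ) • (0 : EuclideanSpace ℂ (Fin n))) = -φ a := by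
          intro θ; simp
        show -φ a ≤ (1/(2*Real.pi)) *
          ∫ θ in (0:ℝ)..(2*Real.pi), -φ (a + (cpt r θ) • (0 : EuclideanSpace ℂ (Fin n)))
        rw [intervalIntegral.integral_congr (fun θ _ => this θ),
          intervalIntegral.integral_const]
        rw [smul_eq_mul, sub_zero]
        have : (1/(2*Real.pi)) * (2*Real.pi * -φ a) = -φ a := by field_simp
        rw [this]
      · -- nontrivial direction
        apply le_of_forall_pos_le_add
        intro ε hε
        have hξn : (0:ℝ) < ‖ξ‖ := norm_pos_iff.mpr hξ
        set c : ℂ := (((‖ξ‖:ℝ) : ℂ)^2)⁻¹ with hcdef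
        set ℓ : EuclideanSpace ℂ (Fin n) → ℂ :=
          fun z => c * ((innerSL ℂ ξ) z - (innerSL ℂ ξ) a) with hldef
        have hℓan : ∀ z, AnalyticAt ℂ ℓ z := fun z =>
          analyticAt_const.mul (((innerSL ℂ ξ).analyticAt z).sub analyticAt_const)
        have hℓline : ∀ w : ℂ, ℓ (a + w • ξ) = w := by
          intro w
          rw [hldef]
          simp only [innerSL_apply_apply]
          rw [show (inner ℂ ξ (a + w • ξ) : ℂ) = inner ℂ ξ a + w * inner ℂ ξ ξ by
            rw [inner_add_right, inner_smul_right]]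
          rw [inner_self_eq_norm_sq_to_K]
          rw [hcdef]
          field_simp
          rw [add_sub_cancel_left, mul_div_assoc]
          simp [hξ]
        have hℓa : ℓ a = 0 := by
          have := hℓline 0
          simpa using this
        -- approximation
        have hWc : ContinuousOn (fun z : ℂ => φ (a + z • ξ) / 2) (Metric.sphere (0:ℂ) r) := by
          apply ContinuousOn.div_const
          apply hφ.comp (hline_c a ξ).continuousOn
          intro w hw
          apply hsub
          have : ‖w‖ = r := by
            simpa using mem_sphere_zero_iff_norm.mp hw
          exact this.le
        obtain ⟨g, hg_an, hg_ap⟩ := trig_approx hr hWc (by positivity : (0:ℝ) < ε/4)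
        -- the holomorphic section
        set s : EuclideanSpace ℂ (Fin n) → ℂ := fun z => Complex.exp (g (ℓ z)) with hsdef
        have hs_an : AnalyticOnNhd ℂ s Ω := fun z _ =>
          ((hg_an (ℓ z) trivial).comp (hℓan z)).cexp
        have hpsh := hB Ω subset_rfl hΩ s hs_an
        have hineq := (hpsh.2 a ha ξ r hr hsub).2
        have hineq' : ‖s a‖^2 * Real.exp (-φ a) ≤ (1/(2*Real.pi)) *
            ∫ θ in (0:ℝ)..(2*Real.pi),
              ‖s (a + (cpt r θ) • ξ)‖^2 * Real.exp (-φ (a + (cpt r θ) • ξ)) := hineq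
        -- norms of s
        have hsval : ∀ z, ‖s z‖^2 = Real.exp (2 * (g (ℓ z)).re) := by
          intro z
          rw [hsdef]
          simp only [Complex.norm_exp]
          rw [sq, ← Real.exp_add]
          ring_nf
        -- pointwise upper bound of the integrand
        have hub : ∀ θ ∈ Set.Icc (0:ℝ) (2*Real.pi),
            ‖s (a + (cpt r θ) • ξ)‖^2 * Real.exp (-φ (a + (cpt r θ) • ξ))
              ≤ Real.exp (ε/2) := by
          intro θ _
          rw [hsval, hℓline, ← Real.exp_add]
          apply Real.exp_le_exp.mpr
          have h1 := abs_le.mp (hg_ap θ)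
          linarith [h1.1]
        have hscont : Continuous (fun θ : ℝ =>
            ‖s (a + (cpt r θ) • ξ)‖^2 * Real.exp (-φ (a + (cpt r θ) • ξ))) := by
          apply Continuous.mul
          · apply Continuous.pow
            apply Continuous.norm
            exact (hs_an.continuousOn.comp_continuous hγcpt hmapsθ)
          · exact Real.continuous_exp.comp hφc.neg
        have hIub : (∫ θ in (0:ℝ)..(2*Real.pi),
            ‖s (a + (cpt r θ) • ξ)‖^2 * Real.exp (-φ (a + (cpt r θ) • ξ)))
              ≤ (2*Real.pi) * Real.exp (ε/2) := by
          have h2 := intervalIntegral.integral_mono_on Real.two_pi_pos.le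
            (hscont.intervalIntegrable (μ := volume) _ _)
            (intervalIntegrable_const (μ := volume) (c := Real.exp (ε/2))) hub
          simpa [smul_eq_mul] using h2
        -- so exp(2 Re g 0 - φ a) ≤ exp (ε/2)
        have hkey : 2 * (g 0).re - φ a ≤ ε/2 := by
          have hLHS : ‖s a‖^2 * Real.exp (-φ a) = Real.exp (2*(g 0).re - φ a) := by
            rw [hsval, hℓa, ← Real.exp_add]
            ring_nf
          have h3 : Real.exp (2*(g 0).re - φ a) ≤ Real.exp (ε/2) := by
            rw [← hLHS]
            calc ‖s a‖^2 * Real.exp (-φ a)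
                ≤ (1/(2*Real.pi)) * ∫ θ in (0:ℝ)..(2*Real.pi),
                  ‖s (a + (cpt r θ) • ξ)‖^2 * Real.exp (-φ (a + (cpt r θ) • ξ)) := hineq'
              _ ≤ (1/(2*Real.pi)) * ((2*Real.pi) * Real.exp (ε/2)) :=
                  mul_le_mul_of_nonneg_left hIub (by positivity)
              _ = Real.exp (ε/2) := by field_simp
          exact Real.exp_le_exp.mp h3
        -- lower bound on Re g 0
        have hgcb : ∀ w ∈ Metric.closedBall (0:ℂ) r, AnalyticAt ℂ g w :=
          fun w _ => hg_an w trivial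
        have hmg := mvp_re hr hgcb
        have hgc : Continuous (fun θ : ℝ => (g (cpt r θ)).re) :=
          Complex.continuous_re.comp (contOn_comp_cpt hr (analyticAt_contOn hgcb))
        have hlb : ∀ θ ∈ Set.Icc (0:ℝ) (2*Real.pi),
            φ (a + (cpt r θ) • ξ) / 2 - ε/4 ≤ (g (cpt r θ)).re := by
          intro θ _
          have h1 := abs_le.mp (hg_ap θ)
          linarith [h1.2]
        have h4 := intervalIntegral.integral_mono_on Real.two_pi_pos.le
          (((hφc.div_const 2).fun_sub continuous_const).intervalIntegrable (μ := volume) _ _)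
          (hgc.intervalIntegrable _ _) hlb
        rw [hmg, intervalIntegral.integral_sub ((hφc.div_const 2).intervalIntegrable _ _)
          intervalIntegrable_const, intervalIntegral.integral_div,
          intervalIntegral.integral_const] at h4
        simp only [smul_eq_mul, sub_zero] at h4
        -- combine : -φ a ≤ (1/2π) ∫ -φ∘ + ε
        set IP := ∫ θ in (0:ℝ)..(2*Real.pi), φ (a + (cpt r θ) • ξ) with hIPdef
        have hIPeq : IP = (2*Real.pi) * ((1/(2*Real.pi)) * IP) := by field_simp
        have h5 : (1/(2*Real.pi)) * IP - ε/2 ≤ 2 * (g 0).re := by nlinarith [hπ]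
        have hIneg : (1/(2*Real.pi)) * (∫ θ in (0:ℝ)..(2*Real.pi),
            -φ (a + (cpt r θ) • ξ)) = -((1/(2*Real.pi)) * IP) := by
          rw [intervalIntegral.integral_neg, hIPdef]; ring
        show -φ a ≤ (1/(2*Real.pi)) * (∫ θ in (0:ℝ)..(2*Real.pi),
            -φ (a + (cpt r θ) • ξ)) + ε
        rw [hIneg]
        linarith
  exact ⟨⟨hAB, hBA⟩, ⟨hAC, hCA⟩⟩
end
end

section
/- Let f : ℂ → ℂ be analytic at a point z₀ with analytic order m ∈ ℕ at z₀ (so f is not identically zero near z₀), and let α > 0 be a real number. Then there exists r > 0 such that z ↦ ‖f(z)‖^(−2α) is Lebesgue-integrable on the disc B(z₀, r) if and only if α · m < 1. -/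
open MeasureTheory

noncomputable section

open Set Real Filter

private lemma radial_key_r2 {R : ℝ} (hR : 0 < R) (q : ℝ) :
    IntegrableOn (fun p : ℝ × ℝ => Real.sqrt (p.1 ^ 2 + p.2 ^ 2) ^ q)
      {p : ℝ × ℝ | Real.sqrt (p.1 ^ 2 + p.2 ^ 2) < R} volume ↔ -2 < q := by
  set S' : Set (ℝ × ℝ) := {p : ℝ × ℝ | Real.sqrt (p.1 ^ 2 + p.2 ^ 2) < R} with hS'
  set T : Set (ℝ × ℝ) := Ioo 0 R ×ˢ Ioo (-π) π with hT'
  set Fq : ℝ × ℝ → ℝ := fun p => Real.sqrt (p.1 ^ 2 + p.2 ^ 2) ^ q with hFq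
  have hTsub : T ⊆ polarCoord.target := by
    rw [polarCoord_target]
    exact prod_mono Ioo_subset_Ioi_self subset_rfl
  have himg : polarCoord.symm '' T = polarCoord.source ∩ S' := by
    rw [polarCoord.symm_image_eq_source_inter_preimage hTsub]
    ext p
    constructor
    · rintro ⟨hp, hmem⟩
      exact ⟨hp, hmem.1.2⟩
    · rintro ⟨hp, hRp⟩
      have ht := polarCoord.map_source hp
      rw [polarCoord_target] at ht
      exact ⟨hp, ⟨ht.1, hRp⟩, ht.2⟩
  have hae : (polarCoord.source ∩ S' : Set (ℝ × ℝ)) =ᵐ[volume] S' := by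
    have h := ae_eq_set_inter polarCoord_source_ae_eq_univ (ae_eq_refl S')
    rwa [univ_inter] at h
  -- Jacobian change of variables
  set B : ℝ × ℝ → ℝ × ℝ →L[ℝ] ℝ × ℝ := fun p =>
    LinearMap.toContinuousLinearMap (Matrix.toLin (Module.Basis.finTwoProd ℝ) (Module.Basis.finTwoProd ℝ)
      !![Real.cos p.2, -p.1 * Real.sin p.2; Real.sin p.2, p.1 * Real.cos p.2]) with hB
  have B_det : ∀ p, (B p).det = p.1 := by
    intro p
    conv_rhs => rw [← one_mul p.1, ← cos_sq_add_sin_sq p.2]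
    simp only [hB, neg_mul, LinearMap.det_toContinuousLinearMap, LinearMap.det_toLin,
      Matrix.det_fin_two_of, sub_neg_eq_add]
    ring
  have hT : MeasurableSet T := measurableSet_Ioo.prod measurableSet_Ioo
  have hder : ∀ p ∈ T, HasFDerivWithinAt polarCoord.symm (B p) T p :=
    fun p _ => (hasFDerivAt_polarCoord_symm p).hasFDerivWithinAt
  have hinj : InjOn polarCoord.symm T :=
    polarCoord.symm.injOn.mono (by rwa [OpenPartialHomeomorph.symm_source])
  have hjac := integrableOn_image_iff_integrableOn_abs_det_fderiv_smul volume hT hder hinj Fq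
  rw [himg] at hjac
  have hres : IntegrableOn Fq S' volume ↔ IntegrableOn Fq (polarCoord.source ∩ S') volume := by
    unfold IntegrableOn
    rw [Measure.restrict_congr_set hae]
  -- simplify the integrand on T
  have hEq : EqOn (fun p : ℝ × ℝ => |(B p).det| • Fq (polarCoord.symm p))
      (fun p : ℝ × ℝ => p.1 ^ (q + 1)) T := by
    rintro ⟨r, θ⟩ ⟨hr, hθ⟩
    have hr0 : (0 : ℝ) < r := hr.1
    have habs : Real.sqrt ((r * Real.cos θ) ^ 2 + (r * Real.sin θ) ^ 2) = r := by
      have h2 : (r * Real.cos θ) ^ 2 + (r * Real.sin θ) ^ 2 = r ^ 2 := by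
        have h := Real.sin_sq_add_cos_sq θ
        nlinarith [h]
      rw [h2, Real.sqrt_sq hr0.le]
    simp only [B_det, smul_eq_mul, hFq, polarCoord_symm_apply, habs, abs_of_pos hr0]
    rw [Real.rpow_add_one hr0.ne', mul_comm]
  rw [hres, hjac, integrableOn_congr_fun hEq hT]
  -- Fubini on the rectangle
  have hprod : (volume : Measure (ℝ × ℝ)).restrict T =
      (volume.restrict (Ioo 0 R)).prod (volume.restrict (Ioo (-π) π)) := by
    rw [hT', Measure.volume_eq_prod, ← Measure.prod_restrict]
  haveI : IsFiniteMeasure (volume.restrict (Ioo (-π) π)) :=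
    ⟨by rw [Measure.restrict_apply_univ]; exact measure_Ioo_lt_top⟩
  constructor
  · intro h
    rw [IntegrableOn, hprod] at h
    haveI : NeBot (ae (volume.restrict (Ioo (-π) π))) := by
      rw [ae_neBot]
      intro h0
      have h1 := congrArg (fun μ : Measure ℝ => μ univ) h0
      simp only [Measure.restrict_apply_univ, Measure.coe_zero, Pi.zero_apply] at h1
      rw [Real.volume_Ioo] at h1
      have hπ : (0 : ℝ) < π - -π := by linarith [Real.pi_pos]
      exact (ENNReal.ofReal_pos.2 hπ).ne' h1
    obtain ⟨θ, hθ⟩ := h.prod_left_ae.exists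
    have := (intervalIntegral.integrableOn_Ioo_rpow_iff hR).mp hθ
    linarith
  · intro h
    rw [IntegrableOn, hprod]
    have h1 : IntegrableOn (fun x : ℝ => x ^ (q + 1)) (Ioo 0 R) volume :=
      (intervalIntegral.integrableOn_Ioo_rpow_iff hR).mpr (by linarith)
    have h2 : Integrable (fun p : ℝ × ℝ => p.1 ^ (q + 1) * 1)
        ((volume.restrict (Ioo 0 R)).prod (volume.restrict (Ioo (-π) π))) :=
      h1.mul_prod (integrable_const (1 : ℝ))
    simpa using h2

private lemma radial_key0 {R : ℝ} (hR : 0 < R) (q : ℝ) :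
    IntegrableOn (fun z : ℂ => ‖z‖ ^ q) (Metric.ball (0 : ℂ) R) volume ↔ -2 < q := by
  have htrans := (Complex.volume_preserving_equiv_real_prod.symm
    Complex.measurableEquivRealProd).integrableOn_comp_preimage
    Complex.measurableEquivRealProd.symm.measurableEmbedding
    (f := fun z : ℂ => ‖z‖ ^ q) (s := Metric.ball (0 : ℂ) R)
  have hpre : Complex.measurableEquivRealProd.symm ⁻¹' Metric.ball (0 : ℂ) R =
      {p : ℝ × ℝ | Real.sqrt (p.1 ^ 2 + p.2 ^ 2) < R} := by
    ext p
    simp only [mem_preimage, Metric.mem_ball, dist_zero_right, mem_setOf_eq,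
      Complex.measurableEquivRealProd_symm_apply]
    rw [Complex.norm_def, Complex.normSq_mk]
    ring_nf
  have hcomp : ((fun z : ℂ => ‖z‖ ^ q) ∘ Complex.measurableEquivRealProd.symm) =
      fun p : ℝ × ℝ => Real.sqrt (p.1 ^ 2 + p.2 ^ 2) ^ q := by
    funext p
    simp only [Function.comp_apply, Complex.measurableEquivRealProd_symm_apply]
    rw [Complex.norm_def, Complex.normSq_mk]
    ring_nf
  rw [hpre, hcomp] at htrans
  rw [← htrans]
  exact radial_key_r2 hR q

private lemma radial_key {z₀ : ℂ} {R : ℝ} (hR : 0 < R) (q : ℝ) :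
    IntegrableOn (fun z : ℂ => ‖z - z₀‖ ^ q) (Metric.ball z₀ R) volume ↔ -2 < q := by
  rw [← radial_key0 hR q]
  have h := (measurePreserving_add_right (volume : Measure ℂ) z₀).integrableOn_comp_preimage
    (MeasurableEquiv.addRight z₀).measurableEmbedding
    (f := fun z : ℂ => ‖z - z₀‖ ^ q) (s := Metric.ball z₀ R)
  rw [← h]
  have h1 : ((fun z : ℂ => ‖z - z₀‖ ^ q) ∘ (· + z₀)) = fun z : ℂ => ‖z‖ ^ q := by
    funext z; simp
  have h2 : ((· + z₀) ⁻¹' Metric.ball z₀ R : Set ℂ) = Metric.ball 0 R := by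
    ext z
    simp [Metric.mem_ball, dist_eq_norm]
  rw [h1, h2]

end

noncomputable section

/-- For `f` analytic at `z₀` with finite vanishing order `m` and `α > 0`, the weight
`‖f‖^(-2α)` is integrable on some small disc around `z₀` iff `α · m < 1`. -/
theorem integrable_abs_rpow_neg_iff (f : ℂ → ℂ) (z₀ : ℂ)
    (hf : AnalyticAt ℂ f z₀) (m : ℕ) (hm : analyticOrderAt f z₀ = m) (α : ℝ) (hα : 0 < α) :
    (∃ r > (0 : ℝ),
        IntegrableOn (fun z : ℂ => ‖f z‖ ^ (-(2 * α))) (Metric.ball z₀ r) volume) ↔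
      α * m < 1 := by
  obtain ⟨g, hg, hg0, hfg⟩ := hf.analyticOrderAt_eq_natCast.mp hm
  set q : ℝ := (m : ℝ) * (-(2 * α)) with hq
  have hm0 : (0 : ℝ) ≤ (m : ℝ) := Nat.cast_nonneg m
  have hq_iff : (-2 < q) ↔ α * ↑m < 1 := by
    rw [hq]
    constructor <;> intro h <;> nlinarith
  have hgz0 : 0 < ‖g z₀‖ := norm_pos_iff.mpr hg0
  set c : ℝ := ‖g z₀‖ / 2 with hc
  set C : ℝ := ‖g z₀‖ + 1 with hC
  have hcpos : 0 < c := by positivity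
  have hCpos : 0 < C := by positivity
  have hnorm : ∀ᶠ z in nhds z₀, ‖g z‖ ∈ Set.Ioo c C := by
    apply hg.continuousAt.norm.eventually_mem
    exact isOpen_Ioo.mem_nhds ⟨by rw [hc]; linarith, by rw [hC]; linarith⟩
  obtain ⟨r₀, hr₀pos, hr₀⟩ := Metric.eventually_nhds_iff.mp
    (hfg.and (hnorm.and hg.eventually_analyticAt))
  -- pointwise identity on the ball
  have hEq : ∀ z ∈ Metric.ball z₀ r₀,
      ‖f z‖ ^ (-(2 * α)) = ‖z - z₀‖ ^ q * ‖g z‖ ^ (-(2 * α)) := by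
    intro z hz
    obtain ⟨hfz, _, _⟩ := hr₀ (Metric.mem_ball.mp hz)
    rw [hfz, smul_eq_mul, norm_mul, norm_pow,
      Real.mul_rpow (by positivity) (norm_nonneg _)]
    congr 1
    rw [← Real.rpow_natCast ‖z - z₀‖ m, ← Real.rpow_mul (norm_nonneg _)]
  have hmeas_base : Measurable (fun z : ℂ => ‖z - z₀‖ ^ q) := by fun_prop
  constructor
  · rintro ⟨r, hr, hint⟩
    set r₁ : ℝ := min r r₀ with hr₁def
    have hr₁ : 0 < r₁ := lt_min hr hr₀pos
    have hsub : Metric.ball z₀ r₁ ⊆ Metric.ball z₀ r₀ :=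
      Metric.ball_subset_ball (min_le_right _ _)
    have hint' : IntegrableOn (fun z : ℂ => ‖f z‖ ^ (-(2 * α))) (Metric.ball z₀ r₁) volume :=
      hint.mono_set (Metric.ball_subset_ball (min_le_left _ _))
    have hdom : IntegrableOn (fun z : ℂ => C ^ (2 * α) * ‖f z‖ ^ (-(2 * α)))
        (Metric.ball z₀ r₁) volume := hint'.const_mul _
    have hbase : IntegrableOn (fun z : ℂ => ‖z - z₀‖ ^ q) (Metric.ball z₀ r₁) volume := by
      apply hdom.mono' hmeas_base.aestronglyMeasurable.restrict
      filter_upwards [ae_restrict_mem measurableSet_ball] with z hz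
      have hz' : z ∈ Metric.ball z₀ r₀ := hsub hz
      obtain ⟨_, ⟨hgc, hgC⟩, _⟩ := hr₀ (Metric.mem_ball.mp hz')
      have e := hEq z hz'
      have hb : C ^ (-(2 * α)) ≤ ‖g z‖ ^ (-(2 * α)) :=
        Real.rpow_le_rpow_of_nonpos (lt_trans hcpos hgc) hgC.le (by linarith)
      have hnn : (0 : ℝ) ≤ ‖z - z₀‖ ^ q := Real.rpow_nonneg (norm_nonneg _) _
      calc ‖‖z - z₀‖ ^ q‖ = ‖z - z₀‖ ^ q := by
            rw [Real.norm_eq_abs, abs_of_nonneg hnn]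
        _ = C ^ (2 * α) * C ^ (-(2 * α)) * ‖z - z₀‖ ^ q := by
            rw [← Real.rpow_add hCpos]
            norm_num
        _ ≤ C ^ (2 * α) * ‖g z‖ ^ (-(2 * α)) * ‖z - z₀‖ ^ q := by
            have h1 : (0 : ℝ) ≤ C ^ (2 * α) := Real.rpow_nonneg hCpos.le _
            have := mul_le_mul_of_nonneg_left hb h1
            exact mul_le_mul_of_nonneg_right this hnn
        _ = C ^ (2 * α) * ‖f z‖ ^ (-(2 * α)) := by rw [e]; ring
    have := (radial_key hr₁ q).mp hbase
    exact hq_iff.mp this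
  · intro h
    refine ⟨r₀, hr₀pos, ?_⟩
    have hbase : IntegrableOn (fun z : ℂ => ‖z - z₀‖ ^ q) (Metric.ball z₀ r₀) volume :=
      (radial_key hr₀pos q).mpr (hq_iff.mpr h)
    have hdom : IntegrableOn (fun z : ℂ => ‖z - z₀‖ ^ q * c ^ (-(2 * α)))
        (Metric.ball z₀ r₀) volume := hbase.mul_const _
    have hcontg : ContinuousOn g (Metric.ball z₀ r₀) := fun z hz =>
      ((hr₀ (Metric.mem_ball.mp hz)).2.2).continuousAt.continuousWithinAt
    have hmeasg : ContinuousOn (fun z : ℂ => ‖g z‖ ^ (-(2 * α))) (Metric.ball z₀ r₀) := by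
      apply hcontg.norm.rpow_const
      intro z hz
      left
      have := (hr₀ (Metric.mem_ball.mp hz)).2.1.1
      exact (lt_trans hcpos this).ne'
    have hasm : AEStronglyMeasurable (fun z : ℂ => ‖f z‖ ^ (-(2 * α)))
        (volume.restrict (Metric.ball z₀ r₀)) := by
      refine AEStronglyMeasurable.congr
        ((hmeas_base.aestronglyMeasurable.restrict).mul
          (hmeasg.aestronglyMeasurable measurableSet_ball)) ?_
      filter_upwards [ae_restrict_mem measurableSet_ball] with z hz
      exact (hEq z hz).symm
    apply hdom.mono' hasm
    filter_upwards [ae_restrict_mem measurableSet_ball] with z hz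
    obtain ⟨_, ⟨hgc, _⟩, _⟩ := hr₀ (Metric.mem_ball.mp hz)
    have e := hEq z hz
    have hb : ‖g z‖ ^ (-(2 * α)) ≤ c ^ (-(2 * α)) :=
      Real.rpow_le_rpow_of_nonpos hcpos hgc.le (by linarith)
    have hnn : (0 : ℝ) ≤ ‖z - z₀‖ ^ q := Real.rpow_nonneg (norm_nonneg _) _
    calc ‖‖f z‖ ^ (-(2 * α))‖ = ‖f z‖ ^ (-(2 * α)) := by
          rw [Real.norm_eq_abs, abs_of_nonneg (Real.rpow_nonneg (norm_nonneg _) _)]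
      _ = ‖z - z₀‖ ^ q * ‖g z‖ ^ (-(2 * α)) := e
      _ ≤ ‖z - z₀‖ ^ q * c ^ (-(2 * α)) := mul_le_mul_of_nonneg_left hb hnn

end
end
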